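/- Let l ≥ 3 and d ≥ 1, and let M(l,d) be the PBD on V = {1,...,l+d} with blocks L = {1,...,l} and all 2-element subsets {i,j} with l+1 ≤ j ≤ l+d, i < j. There exists an element f of the Wilson monoid W(l,d) with image exactly X ⊆ V if and only if L ⊆ X or |X| ≤ d + 1. -/

import Mathlib

/-- A subsystem of a pairwise balanced design. -/
def Subsys {S : Type*} (L : Set (Set S)) (X : Set S) : Prop :=
  ∀ x ∈ X, ∀ y ∈ X, x ≠ y → ∀ B ∈ L, x ∈ B → y ∈ B → B ⊆ X

/-- The domain of a partial function. -/
def pDom {S T : Type*} (f : S → Option T) : Set S := {x | f x ≠ none}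

/-- The image of a partial function. -/
def pIm {S T : Type*} (f : S → Option T) : Set T := {y | ∃ x, f x = some y}

/-- Image of a set under a partial function (only defined points count). -/
def imOn {S T : Type*} (f : S → Option T) (B : Set S) : Set T :=
  {y | ∃ x ∈ B, f x = some y}

/-- Composition of partial functions: first `f`, then `g`. -/
def pComp {S T U : Type*} (g : T → Option U) (f : S → Option T) : S → Option U :=
  fun x => (f x).bind g

/-- The blocks of the PBD `M(l,d)`: the set `L` of size `l`, together with all
two-element sets having at least one point outside `L` (these are exactly the
pairs `{i, j}` with `l + 1 ≤ j ≤ l + d`, `i < j`). -/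
def MldBlocks {V : Type*} (L : Set V) : Set (Set V) :=
  {L} ∪ {B | ∃ x y : V, x ≠ y ∧ (x ∉ L ∨ y ∉ L) ∧ B = {x, y}}

/-- The open sets of `M(l,d)`: subsets of `D = Lᶜ`, and sets containing at
least `l - 1` points of `L`. -/
def OpenMld {V : Type*} (L : Set V) (l : ℕ) (X : Set V) : Prop :=
  X ⊆ Lᶜ ∨ l - 1 ≤ (L ∩ X).ncard

/-- The restriction of the partial function `f` to `L` is a permutation of `L`. -/
def PermOnL {V : Type*} (L : Set V) (f : V → Option V) : Prop :=
  (∀ x ∈ L, ∃ y ∈ L, f x = some y) ∧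
  (∀ x ∈ L, ∀ y ∈ L, f x = f y → x = y) ∧
  (∀ y ∈ L, ∃ x ∈ L, f x = some y)

/-- Membership in the Wilson monoid `W(l,d)` (characterization): the domain is
open; if `L ⊄ Dom(f)` then `|f(L ∩ Dom f)| ≤ 1`; if `L ⊆ Dom(f)` then
`|f(L)| = 1` or `f` restricted to `L` is a permutation of `L`. -/
def MemW {V : Type*} (L : Set V) (l : ℕ) (f : V → Option V) : Prop :=
  OpenMld L l (pDom f) ∧
    (¬L ⊆ pDom f → (imOn f L).ncard ≤ 1) ∧
    (L ⊆ pDom f → ((imOn f L).ncard = 1 ∨ PermOnL L f))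

theorem stmt16 {V : Type*} [Fintype V] (l d : ℕ) (hl : 3 ≤ l) (hd : 1 ≤ d)
    (hcard : Fintype.card V = l + d) (L : Set V) (hL : L.ncard = l)
    (X : Set V) :
    (∃ f : V → Option V, MemW L l f ∧ pIm f = X) ↔ (L ⊆ X ∨ X.ncard ≤ d + 1) := by
  classical
  have hVne : Nonempty V := by
    have : 0 < Fintype.card V := by omega
    exact Fintype.card_pos_iff.mp this
  have hDcard : (Lᶜ : Set V).ncard = d := by
    have h := Set.ncard_add_ncard_compl L
    rw [Nat.card_eq_fintype_card, hcard, hL] at h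
    omega
  have hLne : L.Nonempty := by
    rw [← Set.ncard_pos]
    omega
  constructor
  · rintro ⟨f, ⟨hopen, h1, h2⟩, rfl⟩
    obtain ⟨c⟩ := hVne
    have himc : ∀ B : Set V, imOn f B ⊆ (fun x => (f x).getD c) '' B := by
      rintro B y ⟨x, hxB, hfx⟩
      exact ⟨x, hxB, by simp [hfx]⟩
    have hDim : (imOn f Lᶜ).ncard ≤ d := by
      calc (imOn f Lᶜ).ncard ≤ ((fun x => (f x).getD c) '' Lᶜ).ncard :=
            Set.ncard_le_ncard (himc _) (Set.toFinite _)
        _ ≤ (Lᶜ : Set V).ncard := Set.ncard_image_le (Set.toFinite _)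
        _ = d := hDcard
    have hsplit : pIm f = imOn f L ∪ imOn f Lᶜ := by
      ext y
      constructor
      · rintro ⟨x, hx⟩
        by_cases hxL : x ∈ L
        · exact Or.inl ⟨x, hxL, hx⟩
        · exact Or.inr ⟨x, hxL, hx⟩
      · rintro (⟨x, _, hx⟩ | ⟨x, _, hx⟩) <;> exact ⟨x, hx⟩
    by_cases hLd : L ⊆ pDom f
    · rcases h2 hLd with hone | hperm
      · right
        rw [hsplit]
        calc (imOn f L ∪ imOn f Lᶜ).ncard ≤ (imOn f L).ncard + (imOn f Lᶜ).ncard :=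
              Set.ncard_union_le _ _
          _ ≤ d + 1 := by omega
      · left
        intro y hy
        obtain ⟨x, _, hfx⟩ := hperm.2.2 y hy
        exact ⟨x, hfx⟩
    · right
      have := h1 hLd
      rw [hsplit]
      calc (imOn f L ∪ imOn f Lᶜ).ncard ≤ (imOn f L).ncard + (imOn f Lᶜ).ncard :=
            Set.ncard_union_le _ _
        _ ≤ d + 1 := by omega
  · rintro (hLX | hXcard)
    · refine ⟨fun v => if v ∈ X then some v else none, ⟨?_, ?_, ?_⟩, ?_⟩
      · right
        have hLD : L ⊆ pDom (fun v => if v ∈ X then some v else none) := by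
          intro x hx
          simp [pDom, hLX hx]
        rw [Set.inter_eq_self_of_subset_left hLD, hL]
        omega
      · intro hc
        exact absurd (fun x hx => by simp [pDom, hLX hx]) hc
      · intro _
        right
        refine ⟨fun x hx => ⟨x, hx, by simp [hLX hx]⟩, ?_, fun y hy => ⟨y, hy, by simp [hLX hy]⟩⟩
        intro x hx y hy hxy
        simp only [hLX hx, hLX hy, if_pos, Option.some.injEq] at hxy
        exact hxy
      · ext y
        constructor
        · rintro ⟨x, hx⟩
          by_cases h : x ∈ X <;> simp [h] at hx
          rwa [← hx]
        · intro hy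
          exact ⟨y, by simp [hy]⟩
    · rcases X.eq_empty_or_nonempty with rfl | ⟨x0, hx0⟩
      · refine ⟨fun _ => none, ⟨?_, ?_, ?_⟩, ?_⟩
        · left; intro x hx; simp [pDom] at hx
        · intro _
          have h0 : imOn (fun _ => none : V → Option V) L = ∅ := by
            ext y; simp [imOn]
          simp [h0]
        · intro hc
          obtain ⟨x, hx⟩ := hLne
          have := hc hx
          simp [pDom] at this
        · ext y; simp [pIm]
      · have hXpos : 0 < X.ncard := (Set.ncard_pos X.toFinite).mpr ⟨x0, hx0⟩
        have hA : (X \ {x0}).encard ≤ (Lᶜ : Set V).encard := by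
          rw [← (X.toFinite.diff (t := {x0})).cast_ncard_eq, ← (Lᶜ : Set V).toFinite.cast_ncard_eq]
          have h1 : (X \ {x0}).ncard = X.ncard - 1 :=
            Set.ncard_diff_singleton_of_mem hx0
          have : (X \ {x0}).ncard ≤ (Lᶜ : Set V).ncard := by omega
          exact_mod_cast this
        obtain ⟨g, hgmap, hginj⟩ := (X.toFinite.diff (t := {x0})).exists_injOn_of_encard_le hA
        set A : Set V := X \ {x0} with hAdef
        set f : V → Option V := fun v => if v ∈ L then some x0 else
            (if h : ∃ a ∈ A, g a = v then some h.choose else none) with hfdef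
        have hLD : L ⊆ pDom f := by
          intro x hx
          simp [pDom, hfdef, hx]
        have himL : imOn f L = {x0} := by
          ext y
          constructor
          · rintro ⟨x, hxL, hfx⟩
            simp only [hfdef, if_pos hxL, Option.some.injEq] at hfx
            simp [← hfx]
          · rintro rfl
            obtain ⟨x, hx⟩ := hLne
            exact ⟨x, hx, by simp [hfdef, hx]⟩
        refine ⟨f, ⟨?_, ?_, ?_⟩, ?_⟩
        · right
          rw [Set.inter_eq_self_of_subset_left hLD, hL]
          omega
        · intro hc
          exact absurd hLD hc
        · intro _
          left
          rw [himL]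
          exact Set.ncard_singleton x0
        · ext y
          constructor
          · rintro ⟨x, hfx⟩
            by_cases hxL : x ∈ L
            · simp only [hfdef, if_pos hxL, Option.some.injEq] at hfx
              rwa [← hfx]
            · simp only [hfdef, if_neg hxL] at hfx
              by_cases h : ∃ a ∈ A, g a = x
              · rw [dif_pos h] at hfx
                have hspec := h.choose_spec
                have : y ∈ A := by
                  rw [← Option.some_inj.mp hfx]
                  exact hspec.1
                exact this.1
              · rw [dif_neg h] at hfx
                exact absurd hfx (by simp)
          · intro hy
            by_cases hyx : y = x0
            · obtain ⟨x, hx⟩ := hLne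
              exact ⟨x, by simp [hfdef, hx, hyx]⟩
            · have hyA : y ∈ A := ⟨hy, hyx⟩
              have hgy : g y ∉ L := hgmap hyA
              have h : ∃ a ∈ A, g a = g y := ⟨y, hyA, rfl⟩
              refine ⟨g y, ?_⟩
              simp only [hfdef, if_neg hgy, dif_pos h, Option.some.injEq]
              exact hginj h.choose_spec.1 hyA h.choose_spec.2
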